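/- Let U be an encoding for g₁,…,g_p with scalars μ₁,…,μ_p, let e and f be error elements with s_e = (⟨g_j,e⟩)_j and s_f = (⟨g_j,f⟩)_j, and let (T^e_x)_x and (T^f_x)_x be families of matrices realizing the block decompositions of U† W(e) U and U† W(f) U (i.e., the ((x',k'),(x,k)) entry of U† W(e) U is δ_{x', x+s_e} (T^e_{x+s_e})_{k',k}, and similarly for f). Then: (1) there exists c ∈ ℂ with |c| = 1 such that for all x, x', k, k', the ((x',k'),(x,k)) entry of U† W(e+f) U equals c · (T^e_{x+s_f+s_e} · T^f_{x+s_f})_{k',k} if x' = x + s_e + s_f, and 0 otherwise; and (2) there exists c' ∈ ℂ with |c'| = 1 such that the ((x',k'),(x,k)) entry of U† W(−e) U equals c' · ((T^e_x)†)_{k',k} if x' = x − s_e, and 0 otherwise. -/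

import Mathlib

open Matrix Complex

noncomputable section

/-- ω = exp(2πi/d). -/
def omga (d : ℕ) : ℂ := Complex.exp (2 * Real.pi * Complex.I / d)

/-- The Weyl operator W_{k,l}: (j,j') entry is ω^{jk} if j' = j + l, else 0. -/
def weyl (d : ℕ) (k l : ZMod d) : Matrix (ZMod d) (ZMod d) ℂ :=
  Matrix.of fun j j' => if j' = j + l then omga d ^ (j * k).val else 0

/-- N-fold Kronecker product W(e), indexed by Fin N → ZMod d. -/
def weylN (d N : ℕ) (e : (Fin N → ZMod d) × (Fin N → ZMod d)) :
    Matrix (Fin N → ZMod d) (Fin N → ZMod d) ℂ :=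
  Matrix.of fun j j' => ∏ n, weyl d (e.1 n) (e.2 n) (j n) (j' n)

/-- Symplectic product ⟨e,f⟩ = Σₙ (lₙ mₙ − kₙ nₙ). -/
def symp (d N : ℕ) (e f : (Fin N → ZMod d) × (Fin N → ZMod d)) : ZMod d :=
  ∑ n, (e.2 n * f.1 n - e.1 n * f.2 n)

/-- `U` is an encoding for the error elements `g j` with unimodular scalars `μ j`, with
columns indexed by pairs `(x,k)` via the fixed bijection `ι`: each column
`u_{x,k} = U · e_{ι(x,k)}` is an eigenvector of `W(g j)` with eigenvalue `μ j · ω^{x j}`. -/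
def IsEncoding (d N p : ℕ) [NeZero d]
    (g : Fin p → (Fin N → ZMod d) × (Fin N → ZMod d)) (μ : Fin p → ℂ)
    (ι : ((Fin p → ZMod d) × (Fin (N - p) → ZMod d)) ≃ (Fin N → ZMod d))
    (U : Matrix (Fin N → ZMod d) (Fin N → ZMod d) ℂ) : Prop :=
  ∀ (j : Fin p) (x : Fin p → ZMod d) (k : Fin (N - p) → ZMod d),
    (weylN d N (g j)).mulVec (fun r => U r (ι (x, k))) =
      (μ j * omga d ^ (x j).val) • (fun r => U r (ι (x, k)))


lemma omga_pow_d (d : ℕ) [NeZero d] : omga d ^ d = 1 := by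
  have hd0 : (d:ℂ) ≠ 0 := Nat.cast_ne_zero.mpr (NeZero.ne d)
  rw [omga, ← Complex.exp_nat_mul, mul_comm, div_mul_cancel₀ _ hd0, Complex.exp_two_pi_mul_I]

lemma omga_pow_emod (d : ℕ) [NeZero d] (m : ℕ) : omga d ^ m = omga d ^ (m % d) := by
  conv_lhs => rw [← Nat.mod_add_div m d]
  rw [pow_add, pow_mul, omga_pow_d, one_pow, mul_one]

lemma omga_val_add (d : ℕ) [NeZero d] (a b : ZMod d) :
    omga d ^ (a + b).val = omga d ^ a.val * omga d ^ b.val := by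
  rw [ZMod.val_add, ← omga_pow_emod, pow_add]

lemma omga_norm (d : ℕ) [NeZero d] : ‖omga d‖ = 1 := by
  have : omga d = Complex.exp ((2*Real.pi/d : ℝ) * Complex.I) := by
    rw [omga]; congr 1; push_cast; ring
  rw [this, Complex.norm_exp_ofReal_mul_I]

lemma omga_conj (d : ℕ) [NeZero d] (a : ZMod d) :
    star (omga d ^ a.val) = omga d ^ (-a).val := by
  have hne : omga d ^ a.val ≠ 0 := pow_ne_zero _ (Complex.exp_ne_zero _)
  have h1 : omga d ^ (-a).val * omga d ^ a.val = 1 := by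
    rw [← omga_val_add, neg_add_cancel, ZMod.val_zero, pow_zero]
  have h2 : star (omga d ^ a.val) * omga d ^ a.val = 1 := by
    have hn : ‖omga d ^ a.val‖ = 1 := by rw [norm_pow, omga_norm, one_pow]
    rw [Complex.star_def, Complex.conj_mul', hn]
    norm_num
  exact mul_right_cancel₀ hne (h2.trans h1.symm)

lemma weyl_mul (d : ℕ) [NeZero d] (k l m n : ZMod d) :
    weyl d k l * weyl d m n = (omga d ^ (l * m).val) • weyl d (k + m) (l + n) := by
  ext j j''
  simp only [Matrix.mul_apply, weyl, Matrix.of_apply, Matrix.smul_apply, smul_eq_mul]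
  rw [Finset.sum_eq_single (j + l)]
  · rw [if_pos rfl, ← add_assoc]
    by_cases h : j'' = j + l + n
    · rw [if_pos h, if_pos h, ← omga_val_add, ← omga_val_add]
      congr 1
      ring
    · rw [if_neg h, if_neg h, mul_zero, mul_zero]
  · intro b _ hb
    rw [if_neg hb, zero_mul]
  · simp

lemma weylN_mul (d N : ℕ) [NeZero d] (e f : (Fin N → ZMod d) × (Fin N → ZMod d)) :
    weylN d N e * weylN d N f
      = (∏ n, omga d ^ ((e.2 n) * (f.1 n)).val) • weylN d N (e + f) := by
  ext j j''
  simp only [Matrix.mul_apply, weylN, Matrix.of_apply, Matrix.smul_apply, smul_eq_mul]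
  have h1 : ∀ j' : Fin N → ZMod d,
      (∏ n, weyl d (e.1 n) (e.2 n) (j n) (j' n)) *
        ∏ n, weyl d (f.1 n) (f.2 n) (j' n) (j'' n)
      = ∏ n, (weyl d (e.1 n) (e.2 n) (j n) (j' n) * weyl d (f.1 n) (f.2 n) (j' n) (j'' n)) :=
    fun _ => Finset.prod_mul_distrib.symm
  simp only [h1]
  rw [show (Finset.univ : Finset (Fin N → ZMod d))
      = Fintype.piFinset (fun _ => Finset.univ) from (Fintype.piFinset_univ).symm,
    ← Finset.prod_univ_sum (fun _ : Fin N => (Finset.univ : Finset (ZMod d)))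
      (fun n a => weyl d (e.1 n) (e.2 n) (j n) a * weyl d (f.1 n) (f.2 n) a (j'' n))]
  have h2 : ∀ n : Fin N,
      (∑ a, weyl d (e.1 n) (e.2 n) (j n) a * weyl d (f.1 n) (f.2 n) a (j'' n))
      = omga d ^ ((e.2 n) * (f.1 n)).val
          * weyl d (e.1 n + f.1 n) (e.2 n + f.2 n) (j n) (j'' n) := by
    intro n
    rw [← Matrix.mul_apply, weyl_mul]
    simp
  simp only [h2]
  rw [Finset.prod_mul_distrib]
  rfl

lemma weyl_neg (d : ℕ) [NeZero d] (k l : ZMod d) :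
    weyl d (-k) (-l) = (omga d ^ (-(l * k)).val) • (weyl d k l)ᴴ := by
  ext j j'
  simp only [weyl, Matrix.of_apply, Matrix.smul_apply, Matrix.conjTranspose_apply,
    smul_eq_mul]
  by_cases h : j = j' + l
  · have h' : j' = j + -l := by rw [h]; ring
    rw [if_pos h', if_pos h, omga_conj, ← omga_val_add]
    congr 1
    rw [h]; ring
  · have h' : ¬ j' = j + -l := fun hh => h (by rw [hh]; ring)
    rw [if_neg h', if_neg h, star_zero, mul_zero]

lemma weylN_neg (d N : ℕ) [NeZero d] (e : (Fin N → ZMod d) × (Fin N → ZMod d)) :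
    weylN d N (-e) = (∏ n, omga d ^ (-(e.2 n * e.1 n)).val) • (weylN d N e)ᴴ := by
  ext j j'
  simp only [weylN, Matrix.of_apply, Matrix.smul_apply, Matrix.conjTranspose_apply,
    smul_eq_mul, Prod.fst_neg, Prod.snd_neg, Pi.neg_apply]
  have h1 : ∀ n : Fin N, weyl d (-(e.1 n)) (-(e.2 n)) (j n) (j' n)
      = omga d ^ (-(e.2 n * e.1 n)).val * star (weyl d (e.1 n) (e.2 n) (j' n) (j n)) := by
    intro n
    rw [weyl_neg]
    simp [Matrix.conjTranspose_apply]
  simp only [h1, star_prod, Finset.prod_mul_distrib]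

/-- group structure of error actions: if (T^e_x) and (T^f_x) realize the block
decompositions of U† W(e) U and U† W(f) U, then up to unimodular phases, U† W(e+f) U is
block-realized by x ↦ T^e_{x+s_f+s_e} · T^f_{x+s_f} and U† W(−e) U by x ↦ (T^e_x)†. -/
theorem encoding_error_action_group_structure
    (d N p : ℕ) [NeZero d] (hd : d.Prime) (hN : 1 ≤ N) (hp : p ≤ N)
    (g : Fin p → (Fin N → ZMod d) × (Fin N → ZMod d))
    (μ : Fin p → ℂ) (hμ : ∀ j, ‖μ j‖ = 1)
    (ι : ((Fin p → ZMod d) × (Fin (N - p) → ZMod d)) ≃ (Fin N → ZMod d))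
    (U : Matrix (Fin N → ZMod d) (Fin N → ZMod d) ℂ)
    (hU : U ∈ Matrix.unitaryGroup (Fin N → ZMod d) ℂ)
    (hEnc : IsEncoding d N p g μ ι U)
    (e f : (Fin N → ZMod d) × (Fin N → ZMod d))
    (se sf : Fin p → ZMod d)
    (hse : se = fun j => symp d N (g j) e)
    (hsf : sf = fun j => symp d N (g j) f)
    (Te Tf : (Fin p → ZMod d) →
      Matrix (Fin (N - p) → ZMod d) (Fin (N - p) → ZMod d) ℂ)
    (hTe : ∀ (x x' : Fin p → ZMod d) (k k' : Fin (N - p) → ZMod d),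
      (Uᴴ * weylN d N e * U) (ι (x', k')) (ι (x, k)) =
        if x' = x + se then Te (x + se) k' k else 0)
    (hTf : ∀ (x x' : Fin p → ZMod d) (k k' : Fin (N - p) → ZMod d),
      (Uᴴ * weylN d N f * U) (ι (x', k')) (ι (x, k)) =
        if x' = x + sf then Tf (x + sf) k' k else 0) :
    (∃ c : ℂ, ‖c‖ = 1 ∧
      ∀ (x x' : Fin p → ZMod d) (k k' : Fin (N - p) → ZMod d),
        (Uᴴ * weylN d N (e + f) * U) (ι (x', k')) (ι (x, k)) =
          if x' = x + se + sf
          then c * (Te (x + sf + se) * Tf (x + sf)) k' k else 0) ∧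
    (∃ c' : ℂ, ‖c'‖ = 1 ∧
      ∀ (x x' : Fin p → ZMod d) (k k' : Fin (N - p) → ZMod d),
        (Uᴴ * weylN d N (-e) * U) (ι (x', k')) (ι (x, k)) =
          if x' = x - se then c' * (Te x)ᴴ k' k else 0) := by
  have h1 : U * Uᴴ = 1 := by
    have := hU.2
    simpa [Matrix.star_eq_conjTranspose] using this
  constructor
  · set c : ℂ := ∏ n, omga d ^ ((e.2 n) * (f.1 n)).val with hc
    have hcn : ‖c‖ = 1 := by
      simp [hc, norm_prod, norm_pow, show ‖omga d‖ = 1 from omga_norm d]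
    have hc0 : c ≠ 0 := by
      intro h0; rw [h0, norm_zero] at hcn; norm_num at hcn
    have hAB : (Uᴴ * weylN d N e * U) * (Uᴴ * weylN d N f * U)
        = c • (Uᴴ * weylN d N (e + f) * U) := by
      calc (Uᴴ * weylN d N e * U) * (Uᴴ * weylN d N f * U)
          = Uᴴ * (weylN d N e * ((U * Uᴴ) * (weylN d N f * U))) := by
            simp only [Matrix.mul_assoc]
        _ = Uᴴ * (weylN d N e * weylN d N f) * U := by
            rw [h1, one_mul]; simp only [Matrix.mul_assoc]
        _ = c • (Uᴴ * weylN d N (e + f) * U) := by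
            rw [weylN_mul, Matrix.mul_smul, Matrix.smul_mul]
    have key : ∀ (x x' : Fin p → ZMod d) (k k' : Fin (N - p) → ZMod d),
        ((Uᴴ * weylN d N e * U) * (Uᴴ * weylN d N f * U)) (ι (x', k')) (ι (x, k))
        = if x' = x + sf + se then (Te (x + sf + se) * Tf (x + sf)) k' k else 0 := by
      intro x x' k k'
      rw [Matrix.mul_apply, ← Equiv.sum_comp ι
        (fun r => (Uᴴ * weylN d N e * U) (ι (x', k')) r
          * (Uᴴ * weylN d N f * U) r (ι (x, k))), Fintype.sum_prod_type]
      simp only [hTe, hTf]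
      rw [Finset.sum_eq_single (x + sf)]
      · by_cases h : x' = x + sf + se
        · simp [h, Matrix.mul_apply]
        · simp [h]
      · intro b _ hb
        simp [hb]
      · simp
    refine ⟨c⁻¹, by rw [norm_inv, hcn, inv_one], ?_⟩
    intro x x' k k'
    have hent : c * ((Uᴴ * weylN d N (e + f) * U) (ι (x', k')) (ι (x, k)))
        = if x' = x + sf + se then (Te (x + sf + se) * Tf (x + sf)) k' k else 0 := by
      rw [← key x x' k k', hAB]
      simp
    rw [add_right_comm x se sf]
    rw [show (Uᴴ * weylN d N (e + f) * U) (ι (x', k')) (ι (x, k))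
        = c⁻¹ * (c * ((Uᴴ * weylN d N (e + f) * U) (ι (x', k')) (ι (x, k)))) by
      field_simp]
    rw [hent, mul_ite, mul_zero]
  · set c : ℂ := ∏ n, omga d ^ (-(e.2 n * e.1 n)).val with hc
    have hcn : ‖c‖ = 1 := by
      simp [hc, norm_prod, norm_pow, show ‖omga d‖ = 1 from omga_norm d]
    have h2 : Uᴴ * weylN d N (-e) * U = c • (Uᴴ * weylN d N e * U)ᴴ := by
      rw [weylN_neg, Matrix.mul_smul, Matrix.smul_mul]
      congr 1
      simp [Matrix.conjTranspose_mul, Matrix.mul_assoc]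
    refine ⟨c, hcn, ?_⟩
    intro x x' k k'
    rw [h2]
    simp only [Matrix.smul_apply, Matrix.conjTranspose_apply, smul_eq_mul]
    rw [hTe x' x k' k]
    by_cases h : x' = x - se
    · have hx : x = x' + se := by rw [h]; ring
      rw [if_pos hx, if_pos h, show x' + se = x from by rw [h]; ring]
    · have hx : ¬ x = x' + se := fun hh => h (by rw [hh]; ring)
      rw [if_neg hx, if_neg h, star_zero, mul_zero]

end
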